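/- Let (f^t)_{t ∈ ℝ} be the rotation flow on ℝ² given by f^t(x, y) = (x cos t − y sin t, x sin t + y cos t) (the flow generated by the vector field (ẋ, ẏ) = (−y, x)). Then for every r > 0, the circle C_r = {(x, y) : x² + y² = r²} is a nonempty compact invariant set that is stable via orbit-tracking but is not an attractor via orbit-tracking. -/

import Mathlib

open Filter Topology Set Metric Real

/-- `U` ε-orbit-tracks `A`: there is `T ≥ 0` such that every `x ∈ U` has a `y ∈ A` with
`d(f^t x, f^t y) < ε` for all `t ≥ T`. -/
def OrbitTracks {X : Type*} [MetricSpace X] (f : ℝ → X → X) (U A : Set X) (ε : ℝ) : Prop :=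
  ∃ T : ℝ, 0 ≤ T ∧ ∀ x ∈ U, ∃ y ∈ A, ∀ t : ℝ, T ≤ t → dist (f t x) (f t y) < ε

/-- Let `(f^t)_{t ∈ ℝ}` be the rotation flow on `ℝ²` (with the
Euclidean distance), `f^t (x, y) = (x cos t − y sin t, x sin t + y cos t)`. Then for
every `r > 0`, the circle `C_r = {(x, y) : x² + y² = r²}` is a nonempty compact
invariant set that is stable via orbit-tracking but is not an attractor via
orbit-tracking. -/

private lemma my_norm_sq (p : EuclideanSpace ℝ (Fin 2)) : ‖p‖ ^ 2 = p 0 ^ 2 + p 1 ^ 2 := by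
  rw [EuclideanSpace.norm_eq, Real.sq_sqrt (by positivity)]
  simp [Fin.sum_univ_two, Real.norm_eq_abs, sq_abs]

private lemma my_dist_inv (f : ℝ → EuclideanSpace ℝ (Fin 2) → EuclideanSpace ℝ (Fin 2))
    (hf : ∀ (t : ℝ) (p : EuclideanSpace ℝ (Fin 2)),
      f t p = ![p 0 * Real.cos t - p 1 * Real.sin t,
                p 0 * Real.sin t + p 1 * Real.cos t])
    (t : ℝ) (x y : EuclideanSpace ℝ (Fin 2)) : dist (f t x) (f t y) = dist x y := by
  rw [EuclideanSpace.dist_eq, EuclideanSpace.dist_eq]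
  congr 1
  have h := sin_sq_add_cos_sq t
  simp only [hf, Fin.sum_univ_two, Real.dist_eq, sq_abs, Matrix.cons_val_zero,
    Matrix.cons_val_one, Matrix.head_cons]
  linear_combination ((x 0 - y 0) ^ 2 + (x 1 - y 1) ^ 2) * h

private lemma my_fcoord (f : ℝ → EuclideanSpace ℝ (Fin 2) → EuclideanSpace ℝ (Fin 2))
    (hf : ∀ (t : ℝ) (p : EuclideanSpace ℝ (Fin 2)),
      f t p = ![p 0 * Real.cos t - p 1 * Real.sin t,
                p 0 * Real.sin t + p 1 * Real.cos t])
    (t : ℝ) (p : EuclideanSpace ℝ (Fin 2)) :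
    (f t p) 0 ^ 2 + (f t p) 1 ^ 2 = p 0 ^ 2 + p 1 ^ 2 := by
  have h := sin_sq_add_cos_sq t
  simp only [hf, Matrix.cons_val_zero, Matrix.cons_val_one, Matrix.head_cons]
  linear_combination (p 0 ^ 2 + p 1 ^ 2) * h

private lemma my_finv (f : ℝ → EuclideanSpace ℝ (Fin 2) → EuclideanSpace ℝ (Fin 2))
    (hf : ∀ (t : ℝ) (p : EuclideanSpace ℝ (Fin 2)),
      f t p = ![p 0 * Real.cos t - p 1 * Real.sin t,
                p 0 * Real.sin t + p 1 * Real.cos t])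
    (t : ℝ) (p : EuclideanSpace ℝ (Fin 2)) : f t (f (-t) p) = p := by
  have h := sin_sq_add_cos_sq t
  ext i
  fin_cases i
  · show (f t (f (-t) p)) 0 = p 0
    simp only [hf, Matrix.cons_val_zero, Matrix.cons_val_one, Matrix.head_cons,
      Real.cos_neg, Real.sin_neg]
    linear_combination (p 0) * h
  · show (f t (f (-t) p)) 1 = p 1
    simp only [hf, Matrix.cons_val_zero, Matrix.cons_val_one, Matrix.head_cons,
      Real.cos_neg, Real.sin_neg]
    linear_combination (p 1) * h


theorem stmt_19 (f : ℝ → EuclideanSpace ℝ (Fin 2) → EuclideanSpace ℝ (Fin 2))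
    (hf : ∀ (t : ℝ) (p : EuclideanSpace ℝ (Fin 2)),
      f t p = ![p 0 * Real.cos t - p 1 * Real.sin t,
                p 0 * Real.sin t + p 1 * Real.cos t])
    (r : ℝ) (hr : 0 < r) :
    (({p : EuclideanSpace ℝ (Fin 2) | p 0 ^ 2 + p 1 ^ 2 = r ^ 2} : Set _).Nonempty) ∧
    IsCompact {p : EuclideanSpace ℝ (Fin 2) | p 0 ^ 2 + p 1 ^ 2 = r ^ 2} ∧
    (∀ t : ℝ, 0 ≤ t →
      f t '' {p : EuclideanSpace ℝ (Fin 2) | p 0 ^ 2 + p 1 ^ 2 = r ^ 2} =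
        {p : EuclideanSpace ℝ (Fin 2) | p 0 ^ 2 + p 1 ^ 2 = r ^ 2}) ∧
    (∀ ε : ℝ, 0 < ε → ∃ U : Set (EuclideanSpace ℝ (Fin 2)),
      (∃ V : Set (EuclideanSpace ℝ (Fin 2)), IsOpen V ∧
        {p : EuclideanSpace ℝ (Fin 2) | p 0 ^ 2 + p 1 ^ 2 = r ^ 2} ⊆ V ∧ V ⊆ U) ∧
      OrbitTracks f U {p : EuclideanSpace ℝ (Fin 2) | p 0 ^ 2 + p 1 ^ 2 = r ^ 2} ε) ∧
    ¬ (∃ U : Set (EuclideanSpace ℝ (Fin 2)),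
      (∃ V : Set (EuclideanSpace ℝ (Fin 2)), IsOpen V ∧
        {p : EuclideanSpace ℝ (Fin 2) | p 0 ^ 2 + p 1 ^ 2 = r ^ 2} ⊆ V ∧ V ⊆ U) ∧
      ∀ ε : ℝ, 0 < ε →
        OrbitTracks f U {p : EuclideanSpace ℝ (Fin 2) | p 0 ^ 2 + p 1 ^ 2 = r ^ 2} ε) := by
  set C := {p : EuclideanSpace ℝ (Fin 2) | p 0 ^ 2 + p 1 ^ 2 = r ^ 2} with hC
  have hmem : ∀ p : EuclideanSpace ℝ (Fin 2), p ∈ C ↔ ‖p‖ = r := by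
    intro p
    rw [hC, Set.mem_setOf_eq, ← my_norm_sq p]
    constructor
    · intro h; nlinarith [norm_nonneg p, hr]
    · intro h; rw [h]
  refine ⟨?_, ?_, ?_, ?_, ?_⟩
  · refine ⟨(WithLp.equiv 2 (Fin 2 → ℝ)).symm ![r, 0], ?_⟩
    simp [hC, WithLp.equiv_symm_apply, WithLp.ofLp_toLp]
  · have hcl : IsClosed C := by
      have hCeq : C = (fun p : EuclideanSpace ℝ (Fin 2) => ‖p‖) ⁻¹' {r} := by
        ext p; simpa using hmem p
      rw [hCeq]; exact isClosed_singleton.preimage continuous_norm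
    refine IsCompact.of_isClosed_subset (isCompact_closedBall (0 : EuclideanSpace ℝ (Fin 2)) r)
      hcl ?_
    intro p hp
    rw [Metric.mem_closedBall, dist_zero_right]
    exact le_of_eq ((hmem p).1 hp)
  · intro t _
    apply Set.Subset.antisymm
    · rintro q ⟨p, hp, rfl⟩
      rw [hC, Set.mem_setOf_eq, my_fcoord f hf]
      exact hp
    · intro p hp
      exact ⟨f (-t) p, by rw [hC, Set.mem_setOf_eq, my_fcoord f hf]; exact hp, my_finv f hf t p⟩
  · intro ε hε
    have hδ : 0 < min ε r := lt_min hε hr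
    refine ⟨{p | |‖p‖ - r| < min ε r}, ⟨{p | |‖p‖ - r| < min ε r}, ?_, ?_, subset_rfl⟩, ?_⟩
    · have : {p : EuclideanSpace ℝ (Fin 2) | |‖p‖ - r| < min ε r} =
          (fun p : EuclideanSpace ℝ (Fin 2) => ‖p‖) ⁻¹' (Metric.ball r (min ε r)) := by
        ext p; simp [Real.dist_eq]
      rw [this]; exact Metric.isOpen_ball.preimage continuous_norm
    · intro p hp
      simp [Set.mem_setOf_eq, (hmem p).1 hp]; exact ⟨hε, hr⟩
    · refine ⟨0, le_refl 0, ?_⟩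
      intro x hx
      rw [Set.mem_setOf_eq] at hx
      have h1 : |‖x‖ - r| < r := lt_of_lt_of_le hx (min_le_right _ _)
      have hxpos : 0 < ‖x‖ := by
        rcases abs_lt.1 h1 with ⟨h2, _⟩; linarith
      refine ⟨(r / ‖x‖) • x, ?_, ?_⟩
      · rw [hmem, norm_smul, Real.norm_eq_abs, abs_of_pos (div_pos hr hxpos)]
        field_simp
      · intro t _
        rw [my_dist_inv f hf]
        have key : dist x ((r / ‖x‖) • x) = |‖x‖ - r| := by
          rw [dist_eq_norm, show x - (r / ‖x‖) • x = (1 - r / ‖x‖) • x by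
            rw [sub_smul, one_smul], norm_smul, Real.norm_eq_abs]
          have h3 : (1 - r / ‖x‖) * ‖x‖ = ‖x‖ - r := by field_simp
          calc |1 - r / ‖x‖| * ‖x‖ = |(1 - r / ‖x‖) * ‖x‖| := by
                rw [abs_mul, abs_of_nonneg (norm_nonneg x)]
            _ = |‖x‖ - r| := by rw [h3]
        rw [key]
        exact lt_of_lt_of_le hx (min_le_left _ _)
  · rintro ⟨U, ⟨V, hVopen, hCV, hVU⟩, hU⟩
    set p₀ : EuclideanSpace ℝ (Fin 2) := (WithLp.equiv 2 (Fin 2 → ℝ)).symm ![r, 0] with hp₀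
    have hp₀mem : p₀ ∈ C := by simp [hC, hp₀, WithLp.equiv_symm_apply, WithLp.ofLp_toLp]
    obtain ⟨ρ, hρ, hball⟩ := Metric.isOpen_iff.1 hVopen p₀ (hCV hp₀mem)
    set x : EuclideanSpace ℝ (Fin 2) := (WithLp.equiv 2 (Fin 2 → ℝ)).symm ![r + ρ / 2, 0]
      with hxdef
    have hxd : dist x p₀ = ρ / 2 := by
      rw [EuclideanSpace.dist_eq, Fin.sum_univ_two]
      simp only [hxdef, hp₀, WithLp.equiv_symm_apply, WithLp.ofLp_toLp, Matrix.cons_val_zero,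
        Matrix.cons_val_one, Matrix.head_cons, Real.dist_eq]
      rw [show r + ρ / 2 - r = ρ / 2 by ring]
      rw [abs_of_pos (by linarith : (0:ℝ) < ρ / 2)]
      simp
      exact Real.sqrt_sq (by linarith)
    have hxU : x ∈ U := hVU (hball (by rw [Metric.mem_ball, hxd]; linarith))
    have hxnorm : ‖x‖ = r + ρ / 2 := by
      have h2 : ‖x‖ ^ 2 = (r + ρ / 2) ^ 2 := by
        rw [my_norm_sq]
        simp [hxdef, WithLp.equiv_symm_apply, WithLp.ofLp_toLp]
      nlinarith [norm_nonneg x]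
    obtain ⟨T, hT, h⟩ := hU (ρ / 2) (by linarith)
    obtain ⟨y, hy, hd⟩ := h x hxU
    have hd' := hd T le_rfl
    rw [my_dist_inv f hf] at hd'
    have hylt : ‖y‖ = r := (hmem y).1 hy
    have hle : ρ / 2 ≤ dist x y := by
      have := norm_sub_norm_le x y
      rw [hxnorm, hylt] at this
      rw [dist_eq_norm]
      linarith
    linarith
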